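/- arXiv:2110.03629 — 3 statements merged into one kernel-verified Lean document; each statement's English description precedes it below -/
import Mathlib

section
/- Let d ≥ 1 and let (U_k)_{k∈K} be a finite family of d×d complex unitary matrices with weights p_k ≥ 0, Σ_k p_k = 1, satisfying, for every Hermitian d×d matrix B: (i) Σ_k p_k Σ_{b=0}^{d-1} U_k† E_{bb} U_k = I, and (ii) Σ_k p_k Σ_{b=0}^{d-1} (⟨b| U_k B U_k† |b⟩)² · U_k† E_{bb} U_k = [ (Tr B)² I + 2 (Tr B) B + 2 B² + Tr(B²) I ] / ((d+1)(d+2)). Then for every Hermitian d×d matrix O, writing O' = (d+1)O − Tr(O)·I, one has the Loewner-order inequality Σ_k p_k Σ_{b=0}^{d-1} (⟨b| U_k O' U_k† |b⟩)² · U_k† E_{bb} U_k ⪯ 2·𝒮(O). -/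
open Matrix Kronecker BigOperators
open scoped ComplexOrder

/-- `𝒮(O) := 2·{ [2·(Tr O)² + Tr(O²)]·I + 2·(Tr O)·O + 2·O² }`. -/
noncomputable def Smat {d : ℕ} (O : Matrix (Fin d) (Fin d) ℂ) : Matrix (Fin d) (Fin d) ℂ :=
  (2 : ℂ) • ((2 * (Matrix.trace O) ^ 2 + Matrix.trace (O * O)) • (1 : Matrix (Fin d) (Fin d) ℂ)
    + (2 * Matrix.trace O) • O + (2 : ℂ) • (O * O))

lemma psd_aux {n : ℕ} (M : Matrix (Fin n) (Fin n) ℂ) (c r : ℝ) (hc : 0 ≤ c) (hr : 0 ≤ r) :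
    ((c : ℂ) • (Mᴴ * M) + (r : ℂ) • (1 : Matrix (Fin n) (Fin n) ℂ)).PosSemidef := by
  have h1 := Matrix.posSemidef_conjTranspose_mul_self M
  constructor
  · have hh := h1.1
    simp only [Matrix.IsHermitian, Matrix.conjTranspose_add, Matrix.conjTranspose_smul,
      Complex.star_def, Complex.conj_ofReal, Matrix.conjTranspose_one, hh.eq]
  · intro x
    have hc' : (0:ℂ) ≤ (c:ℂ) := by exact_mod_cast hc
    have hr' : (0:ℂ) ≤ (r:ℂ) := by exact_mod_cast hr
    exact ((h1.smul hc').add (Matrix.PosSemidef.one.smul hr')).2 x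

/-- Lemma 1: for any weighted family of unitaries satisfying the first- and third-moment
identities of a unitary 3-design, the shadow-norm-type sum of the inverted observable
`O' = (d+1)O − Tr(O)·I` is dominated (in the Loewner order) by `2·𝒮(O)`. -/
theorem stmt_0 {d : ℕ} (hd : 1 ≤ d) {K : Type} [Fintype K]
    (U : K → Matrix (Fin d) (Fin d) ℂ) (p : K → ℝ)
    (hU : ∀ k, U k ∈ Matrix.unitaryGroup (Fin d) ℂ)
    (hp : ∀ k, 0 ≤ p k) (hpsum : ∑ k, p k = 1)
    (h1 : ∑ k, (p k : ℂ) •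
        (∑ b : Fin d, (U k)ᴴ * Matrix.single b b 1 * U k) = 1)
    (h3 : ∀ B : Matrix (Fin d) (Fin d) ℂ, B.IsHermitian →
      ∑ k, (p k : ℂ) • (∑ b : Fin d,
          ((U k * B * (U k)ᴴ) b b) ^ 2 • ((U k)ᴴ * Matrix.single b b 1 * U k))
        = (((d : ℂ) + 1) * ((d : ℂ) + 2))⁻¹ •
            (((Matrix.trace B) ^ 2 + Matrix.trace (B * B)) • (1 : Matrix (Fin d) (Fin d) ℂ)
              + (2 * Matrix.trace B) • B + (2 : ℂ) • (B * B)))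
    (O : Matrix (Fin d) (Fin d) ℂ) (hO : O.IsHermitian) :
    ((2 : ℂ) • Smat O
      - ∑ k, (p k : ℂ) • (∑ b : Fin d,
          ((U k * (((d : ℂ) + 1) • O - Matrix.trace O • 1) * (U k)ᴴ) b b) ^ 2 •
            ((U k)ᴴ * Matrix.single b b 1 * U k))).PosSemidef := by
  classical
  -- trace O is real
  have htr : (starRingEnd ℂ) (Matrix.trace O) = Matrix.trace O := by
    have h := congrArg Matrix.trace hO.eq
    rwa [Matrix.trace_conjTranspose] at h
  have hts : ((Matrix.trace O).re : ℂ) = Matrix.trace O := Complex.conj_eq_iff_re.mp htr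
  set tr : ℝ := (Matrix.trace O).re with htrdef
  -- trace (O*O) is real and nonneg
  have hOO : O * O = Oᴴ * O := by rw [hO.eq]
  have hs0 : (0:ℂ) ≤ Matrix.trace (O * O) := by
    rw [hOO]
    simp only [Matrix.trace, Matrix.diag, Matrix.mul_apply, Matrix.conjTranspose_apply]
    exact Finset.sum_nonneg fun i _ => Finset.sum_nonneg fun j _ => star_mul_self_nonneg _
  have hss : (((Matrix.trace (O * O)).re : ℝ) : ℂ) = Matrix.trace (O * O) := by
    have him : (Matrix.trace (O * O)).im = 0 := by
      have := (Complex.le_def.mp hs0).2; simpa using this.symm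
    exact Complex.ext (by simp) (by simp [him])
  set sr : ℝ := (Matrix.trace (O * O)).re with hsrdef
  have hsr0 : 0 ≤ sr := by
    have := (Complex.le_def.mp hs0).1; simpa using this
  -- B is Hermitian
  have hB : (((d : ℂ) + 1) • O - Matrix.trace O • 1).IsHermitian := by
    simp only [Matrix.IsHermitian, Matrix.conjTranspose_sub, Matrix.conjTranspose_smul,
      Matrix.conjTranspose_one, hO.eq, Complex.star_def, htr]
    congr 1
    simp
  have key := h3 _ hB
  -- scalars
  have hdR : (1:ℝ) ≤ (d:ℝ) := by exact_mod_cast hd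
  have h2ne : ((d:ℂ) + 2) ≠ 0 := by
    have : ((d:ℂ) + 2) = (((d:ℝ) + 2 : ℝ) : ℂ) := by push_cast; ring
    rw [this, Ne, Complex.ofReal_eq_zero]; positivity
  have h1ne : ((d:ℂ) + 1) ≠ 0 := by
    have : ((d:ℂ) + 1) = (((d:ℝ) + 1 : ℝ) : ℂ) := by push_cast; ring
    rw [this, Ne, Complex.ofReal_eq_zero]; positivity
  have h6ne : (6 * (d:ℂ) + 14) ≠ 0 := by
    have : (6 * (d:ℂ) + 14) = ((6 * (d:ℝ) + 14 : ℝ) : ℂ) := by push_cast; ring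
    rw [this, Ne, Complex.ofReal_eq_zero]; positivity
  set cR : ℝ := (6 * d + 14) / (d + 2) with hcRdef
  set aR : ℝ := tr * (4 * d + 9) / (6 * d + 14) with haRdef
  set rR : ℝ := tr ^ 2 * (32 * d ^ 2 + 142 * d + 157) / ((6 * d + 14) * (d + 2))
      + sr * (3 * d + 7) / (d + 2) with hrRdef
  have hcR : 0 ≤ cR := by positivity
  have hrR : 0 ≤ rR := by
    apply add_nonneg
    · positivity
    · apply div_nonneg (mul_nonneg hsr0 (by positivity)) (by positivity)
  set M : Matrix (Fin d) (Fin d) ℂ := O + (aR : ℂ) • 1 with hMdef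
  have hMH : Mᴴ = M := by
    rw [hMdef]
    simp [Matrix.conjTranspose_add, Matrix.conjTranspose_smul, hO.eq, Complex.star_def,
      Complex.conj_ofReal]
  -- algebraic expansions
  have hBB : (((d : ℂ) + 1) • O - Matrix.trace O • 1) * (((d : ℂ) + 1) • O - Matrix.trace O • 1)
      = ((d:ℂ)+1)^2 • (O*O) - (2*((d:ℂ)+1)*Matrix.trace O) • O + (Matrix.trace O)^2 • 1 := by
    simp only [Matrix.sub_mul, Matrix.mul_sub, Matrix.smul_mul, Matrix.mul_smul,
      Matrix.one_mul, Matrix.mul_one, smul_smul]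
    module
  have hMM : M * M = O * O + (2*(aR:ℂ)) • O + ((aR:ℂ)^2) • 1 := by
    rw [hMdef]
    simp only [Matrix.add_mul, Matrix.mul_add, Matrix.smul_mul, Matrix.mul_smul,
      Matrix.one_mul, Matrix.mul_one, smul_smul]
    module
  have htB : Matrix.trace (((d : ℂ) + 1) • O - Matrix.trace O • 1) = Matrix.trace O := by
    simp [Matrix.trace_sub, Matrix.trace_smul, Matrix.trace_one, smul_eq_mul]
    ring
  have htBB : Matrix.trace ((((d : ℂ) + 1) • O - Matrix.trace O • 1)
        * (((d : ℂ) + 1) • O - Matrix.trace O • 1))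
      = ((d:ℂ)+1)^2 * Matrix.trace (O*O) - 2*((d:ℂ)+1)*(Matrix.trace O)^2
        + (Matrix.trace O)^2 * d := by
    rw [hBB]
    simp [Matrix.trace_add, Matrix.trace_sub, Matrix.trace_smul, Matrix.trace_one, smul_eq_mul]
    ring
  have main : (2 : ℂ) • Smat O
      - ∑ k, (p k : ℂ) • (∑ b : Fin d,
          ((U k * (((d : ℂ) + 1) • O - Matrix.trace O • 1) * (U k)ᴴ) b b) ^ 2 •
            ((U k)ᴴ * Matrix.single b b 1 * U k))
      = (cR : ℂ) • (Mᴴ * M) + (rR : ℂ) • (1 : Matrix (Fin d) (Fin d) ℂ) := by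
    rw [key, hMH, hMM, htB, htBB, hBB, Smat]
    rw [← hts, ← hss]
    rw [hcRdef, hrRdef, haRdef]
    match_scalars <;>
    · push_cast
      field_simp
      ring
  rw [main]
  exact psd_aux M cR rR hcR hrR
end

section
/- Let d₁, d₂ ≥ 1 and let (U_k, p_k)_{k∈K} and (V_l, q_l)_{l∈L} be finite weighted families of d₁×d₁ and d₂×d₂ unitaries respectively, each satisfying the first- and third-moment identities: for every Hermitian B of the appropriate size, Σ p · Σ_b U† E_{bb} U = I and Σ p · Σ_b (⟨b|U B U†|b⟩)² U† E_{bb} U = [(Tr B)² I + 2(Tr B)B + 2B² + Tr(B²) I]/((d+1)(d+2)) (with d = d₁ resp. d₂). Then for every Hermitian d₁×d₁ matrix A, every Hermitian d₂×d₂ matrix B, and every positive semidefinite σ on ℂ^{d₁}⊗ℂ^{d₂} with Tr σ = 1, writing A' = (d₁+1)A − Tr(A)·I and B' = (d₂+1)B − Tr(B)·I: Σ_{k,l} p_k q_l Σ_{b₁=0}^{d₁-1} Σ_{b₂=0}^{d₂-1} Tr[ σ · (U_k† E_{b₁b₁} U_k ⊗ V_l† E_{b₂b₂} V_l) ] ·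 (⟨b₁|U_k A' U_k†|b₁⟩)² · (⟨b₂|V_l B' V_l†|b₂⟩)² ≤ 4·‖𝒮(A)‖·‖𝒮(B)‖, where ‖·‖ is the operator norm. -/
open Matrix Kronecker BigOperators
open scoped ComplexOrder

/-- The operator norm (largest singular value) of a complex matrix. -/
noncomputable def opNorm {d : ℕ} (M : Matrix (Fin d) (Fin d) ℂ) : ℝ :=
  ‖(Matrix.toEuclideanCLM (𝕜 := ℂ) M : EuclideanSpace ℂ (Fin d) →L[ℂ] EuclideanSpace ℂ (Fin d))‖

/-- The first- and third-moment identities of a unitary 3-design ensemble. -/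
def MomentIdentities {d : ℕ} {K : Type} [Fintype K]
    (U : K → Matrix (Fin d) (Fin d) ℂ) (p : K → ℝ) : Prop :=
  (∑ k, (p k : ℂ) • (∑ b : Fin d, (U k)ᴴ * Matrix.single b b 1 * U k) = 1) ∧
  (∀ B : Matrix (Fin d) (Fin d) ℂ, B.IsHermitian →
    ∑ k, (p k : ℂ) • (∑ b : Fin d,
        ((U k * B * (U k)ᴴ) b b) ^ 2 • ((U k)ᴴ * Matrix.single b b 1 * U k))
      = (((d : ℂ) + 1) * ((d : ℂ) + 2))⁻¹ •
          (((Matrix.trace B) ^ 2 + Matrix.trace (B * B)) • (1 : Matrix (Fin d) (Fin d) ℂ)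
            + (2 * Matrix.trace B) • B + (2 : ℂ) • (B * B)))

/-! ### Auxiliary lemmas -/

lemma aux_psd_sum {ι n : Type*} [Fintype n] (s : Finset ι) (f : ι → Matrix n n ℂ)
    (h : ∀ i ∈ s, (f i).PosSemidef) : (∑ i ∈ s, f i).PosSemidef :=
  Finset.sum_induction f _ (fun _ _ ha hb => ha.add hb) .zero h

lemma aux_psd_smul {n : Type*} [Fintype n] {M : Matrix n n ℂ} (hM : M.PosSemidef)
    {c : ℂ} (hc : 0 ≤ c) : (c • M).PosSemidef := by
  refine Matrix.PosSemidef.of_dotProduct_mulVec_nonneg ?_ ?_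
  · have : star c = c := IsSelfAdjoint.of_nonneg hc
    simp [Matrix.IsHermitian, conjTranspose_smul, this, hM.1.eq]
  · intro x
    rw [smul_mulVec, dotProduct_smul, smul_eq_mul]
    exact mul_nonneg hc (hM.dotProduct_mulVec_nonneg x)

lemma aux_kron_conjT {m n : Type*} (A : Matrix m m ℂ) (B : Matrix n n ℂ) :
    (A ⊗ₖ B)ᴴ = Aᴴ ⊗ₖ Bᴴ := by
  ext ⟨i, j⟩ ⟨k, l⟩
  simp [conjTranspose_apply, kroneckerMap_apply]

lemma aux_psd_kron {m n : Type*} [Fintype m] [Fintype n] [DecidableEq m] [DecidableEq n]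
    {A : Matrix m m ℂ} {B : Matrix n n ℂ} (hA : A.PosSemidef) (hB : B.PosSemidef) :
    (A ⊗ₖ B).PosSemidef := by
  obtain ⟨P, hP⟩ : ∃ P : Matrix m m ℂ, A = Pᴴ * P := by
    open MatrixOrder in
    obtain ⟨P, rfl⟩ := CStarAlgebra.nonneg_iff_eq_star_mul_self.mp hA.nonneg
    exact ⟨P, rfl⟩
  obtain ⟨Q, hQ⟩ : ∃ Q : Matrix n n ℂ, B = Qᴴ * Q := by
    open MatrixOrder in
    obtain ⟨Q, rfl⟩ := CStarAlgebra.nonneg_iff_eq_star_mul_self.mp hB.nonneg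
    exact ⟨Q, rfl⟩
  rw [hP, hQ, Matrix.mul_kronecker_mul, ← aux_kron_conjT]
  exact Matrix.posSemidef_conjTranspose_mul_self _

lemma aux_psd_trace_nonneg {n : Type*} [Fintype n] [DecidableEq n] {M : Matrix n n ℂ}
    (hM : M.PosSemidef) : 0 ≤ M.trace := by
  rw [Matrix.trace]
  refine Finset.sum_nonneg fun i _ => ?_
  have := hM.dotProduct_mulVec_nonneg (Pi.single i 1)
  simpa [Matrix.diag, dotProduct, Pi.single_apply, apply_ite] using this

lemma aux_psd_trace_mul_nonneg {n : Type*} [Fintype n] [DecidableEq n] {M N : Matrix n n ℂ}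
    (hM : M.PosSemidef) (hN : N.PosSemidef) : 0 ≤ (M * N).trace := by
  obtain ⟨P, hP⟩ : ∃ P : Matrix n n ℂ, M = Pᴴ * P := by
    open MatrixOrder in
    obtain ⟨P, rfl⟩ := CStarAlgebra.nonneg_iff_eq_star_mul_self.mp hM.nonneg
    exact ⟨P, rfl⟩
  obtain ⟨Q, hQ⟩ : ∃ Q : Matrix n n ℂ, N = Qᴴ * Q := by
    open MatrixOrder in
    obtain ⟨Q, rfl⟩ := CStarAlgebra.nonneg_iff_eq_star_mul_self.mp hN.nonneg
    exact ⟨Q, rfl⟩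
  rw [hP, hQ]
  have h0 : Pᴴ * P * (Qᴴ * Q) = Pᴴ * (P * Qᴴ * Q) := by
    simp only [Matrix.mul_assoc]
  rw [h0, Matrix.trace_mul_comm, Matrix.mul_assoc, Matrix.mul_assoc, ← Matrix.mul_assoc]
  have h2 : (P * Qᴴ) * (Q * Pᴴ) = (Q * Pᴴ)ᴴ * (Q * Pᴴ) := by
    rw [Matrix.conjTranspose_mul, Matrix.conjTranspose_conjTranspose]
  rw [h2]
  exact aux_psd_trace_nonneg (Matrix.posSemidef_conjTranspose_mul_self _)

lemma aux_psd_opNorm_smul_one_sub {d : ℕ} {M : Matrix (Fin d) (Fin d) ℂ} (hM : M.IsHermitian) :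
    (((opNorm M : ℝ) : ℂ) • 1 - M).PosSemidef := by
  refine Matrix.PosSemidef.of_dotProduct_mulVec_nonneg ?_ ?_
  · have h1 : (((opNorm M : ℝ) : ℂ) • (1 : Matrix (Fin d) (Fin d) ℂ)).IsHermitian := by
      simp [Matrix.IsHermitian, conjTranspose_smul]
    exact h1.sub hM
  · intro x
    set T := (Matrix.toEuclideanCLM (𝕜 := ℂ) M : EuclideanSpace ℂ (Fin d) →L[ℂ] EuclideanSpace ℂ (Fin d)) with hT
    have hsa : _root_.IsSelfAdjoint T := by
      show star T = T
      rw [hT, ← map_star, Matrix.star_eq_conjTranspose, hM.eq]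
    set v : EuclideanSpace ℂ (Fin d) := (WithLp.equiv 2 _).symm x with hv
    have key : star x ⬝ᵥ (M *ᵥ x) = inner (𝕜 := ℂ) v (T v) := by
      rw [EuclideanSpace.inner_eq_star_dotProduct]
      simp [v, T, Matrix.toLin'_apply]
      exact dotProduct_comm _ _
    have keyv : star x ⬝ᵥ x = (‖v‖ : ℂ) ^ 2 := by
      have h := @inner_self_eq_norm_sq_to_K ℂ _ _ _ _ v
      rw [EuclideanSpace.inner_eq_star_dotProduct] at h
      rw [dotProduct_comm]
      simpa [v] using h
    set z : ℂ := inner (𝕜 := ℂ) v (T v) with hz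
    have hconj : (starRingEnd ℂ) z = z := by
      rw [hz, inner_conj_symm]
      have h2 := hsa.isSymmetric v v
      simpa using h2
    have him : z.im = 0 := Complex.conj_eq_iff_im.mp hconj
    have hre : z.re ≤ opNorm M * ‖v‖ ^ 2 := by
      calc z.re ≤ ‖z‖ := Complex.re_le_norm z
        _ = ‖z‖ := rfl
        _ ≤ ‖v‖ * ‖T v‖ := norm_inner_le_norm v (T v)
        _ ≤ ‖v‖ * (‖T‖ * ‖v‖) := by
            exact mul_le_mul_of_nonneg_left (T.le_opNorm v) (norm_nonneg v)
        _ = opNorm M * ‖v‖ ^ 2 := by rw [opNorm, ← hT]; ring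
    rw [Matrix.sub_mulVec, dotProduct_sub, Matrix.smul_mulVec, Matrix.one_mulVec,
      dotProduct_smul, keyv, key]
    rw [Complex.le_def]
    constructor
    · simp only [smul_eq_mul, Complex.sub_re, Complex.zero_re, Complex.mul_re,
        Complex.ofReal_re, Complex.ofReal_im]
      have h1 : ((‖v‖ : ℂ) ^ 2).re = ‖v‖ ^ 2 := by norm_cast
      have h2 : ((‖v‖ : ℂ) ^ 2).im = 0 := by norm_cast
      rw [h1, h2]
      simp only [mul_zero, zero_mul, sub_zero]
      linarith
    · simp only [smul_eq_mul, Complex.sub_im, Complex.zero_im, Complex.mul_im,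
        Complex.ofReal_re, Complex.ofReal_im, him]
      have h1 : ((‖v‖ : ℂ) ^ 2).re = ‖v‖ ^ 2 := by norm_cast
      have h2 : ((‖v‖ : ℂ) ^ 2).im = 0 := by norm_cast
      rw [h1, h2]
      ring

lemma aux_herm_sq_psd {n : Type*} [Fintype n] {H : Matrix n n ℂ} (hH : H.IsHermitian) :
    (H * H).PosSemidef := by
  have : H * H = Hᴴ * H := by rw [hH.eq]
  rw [this]
  exact Matrix.posSemidef_conjTranspose_mul_self _

lemma aux_side_psd {d : ℕ} {K : Type} [Fintype K]
    (U : K → Matrix (Fin d) (Fin d) ℂ) (p : K → ℝ)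
    (hmom : MomentIdentities U p)
    (A : Matrix (Fin d) (Fin d) ℂ) (hA : A.IsHermitian) :
    ((((opNorm (Smat A)) : ℝ) : ℂ) • 1 -
      ∑ k, (p k : ℂ) • (∑ b : Fin d,
        ((U k * (((d : ℂ) + 1) • A - Matrix.trace A • 1) * (U k)ᴴ) b b) ^ 2 •
          ((U k)ᴴ * Matrix.single b b 1 * U k))).PosSemidef := by
  have ht : star (Matrix.trace A) = Matrix.trace A := by
    rw [← Matrix.trace_conjTranspose, hA.eq]
  have hA' : (((d : ℂ) + 1) • A - Matrix.trace A • 1).IsHermitian := by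
    simp [Matrix.IsHermitian, conjTranspose_sub, conjTranspose_smul, hA.eq, ht]
  rw [hmom.2 _ hA']
  set cA : ℂ := ((opNorm (Smat A) : ℝ) : ℂ) with hcA
  have key : cA • (1 : Matrix (Fin d) (Fin d) ℂ) -
      ((((d : ℂ) + 1) * ((d : ℂ) + 2))⁻¹ •
        (((Matrix.trace (((d : ℂ) + 1) • A - Matrix.trace A • 1)) ^ 2
            + Matrix.trace ((((d : ℂ) + 1) • A - Matrix.trace A • 1) * (((d : ℂ) + 1) • A - Matrix.trace A • 1))) • (1 : Matrix (Fin d) (Fin d) ℂ)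
          + (2 * Matrix.trace (((d : ℂ) + 1) • A - Matrix.trace A • 1)) • (((d : ℂ) + 1) • A - Matrix.trace A • 1)
          + (2 : ℂ) • ((((d : ℂ) + 1) • A - Matrix.trace A • 1) * (((d : ℂ) + 1) • A - Matrix.trace A • 1))))
    = ((((d : ℂ) + 1) * ((d : ℂ) + 2))⁻¹ • (((d : ℂ) + 1) •
        ((Matrix.trace A • 1 + A) * (Matrix.trace A • 1 + A)
          + ((d : ℂ) + 1) • ((cA • 1 - Smat A) + Matrix.trace (A * A) • (1 : Matrix (Fin d) (Fin d) ℂ)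
              + ((2 * Matrix.trace A) • 1 + A) * ((2 * Matrix.trace A) • 1 + A))
          + cA • (1 : Matrix (Fin d) (Fin d) ℂ) + (d : ℂ) • (A * A)))) := by
    have hd1 : ((d : ℂ) + 1) ≠ 0 := by
      intro h
      have := congrArg Complex.re h
      push_cast at this
      linarith
    have hd2 : ((d : ℂ) + 2) ≠ 0 := by
      intro h
      have := congrArg Complex.re h
      push_cast at this
      linarith
    simp only [Smat, Matrix.trace_sub, Matrix.trace_smul, Matrix.trace_one, Fintype.card_fin,
      Matrix.sub_mul, Matrix.mul_sub, Matrix.add_mul, Matrix.mul_add, smul_mul_assoc,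
      mul_smul_comm, Matrix.one_mul, Matrix.mul_one, Matrix.trace_add, smul_eq_mul]
    match_scalars
    · field_simp; ring
    · field_simp; ring
    · field_simp; ring
  rw [key]
  have hs : (0:ℂ) ≤ Matrix.trace (A * A) := by
    have : A * A = Aᴴ * A := by rw [hA.eq]
    rw [this]
    exact aux_psd_trace_nonneg (Matrix.posSemidef_conjTranspose_mul_self A)
  have hcA0 : (0:ℂ) ≤ cA := by
    rw [hcA]
    exact_mod_cast Complex.zero_le_real.mpr (norm_nonneg _)
  have hSm : (Smat A).IsHermitian := by
    have hs' : star (Matrix.trace (A * A)) = Matrix.trace (A * A) :=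
      IsSelfAdjoint.of_nonneg hs
    simp [Smat, Matrix.IsHermitian, conjTranspose_add, conjTranspose_smul, hA.eq, ht, hs',
      conjTranspose_mul, star_mul', star_add]
  have h1 : ((Matrix.trace A • 1 + A) * (Matrix.trace A • 1 + A)).PosSemidef := by
    apply aux_herm_sq_psd
    simp [Matrix.IsHermitian, conjTranspose_add, conjTranspose_smul, hA.eq, ht]
  have h2 : (((2 * Matrix.trace A) • 1 + A) * ((2 * Matrix.trace A) • 1 + A)).PosSemidef := by
    apply aux_herm_sq_psd
    simp [Matrix.IsHermitian, conjTranspose_add, conjTranspose_smul, hA.eq, ht, star_mul']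
  have hG : ((cA • 1 - Smat A) + Matrix.trace (A * A) • (1 : Matrix (Fin d) (Fin d) ℂ)
      + ((2 * Matrix.trace A) • 1 + A) * ((2 * Matrix.trace A) • 1 + A)).PosSemidef := by
    refine Matrix.PosSemidef.add (Matrix.PosSemidef.add ?_ (aux_psd_smul .one hs)) h2
    exact aux_psd_opNorm_smul_one_sub hSm
  have hd1' : (0:ℂ) ≤ ((d : ℂ) + 1) := by
    have : ((d : ℂ) + 1) = (((d:ℝ) + 1 : ℝ) : ℂ) := by push_cast; ring
    rw [this]
    exact Complex.zero_le_real.mpr (by positivity)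
  have hdn : (0:ℂ) ≤ (d : ℂ) := by
    have : ((d : ℂ)) = (((d:ℝ) : ℝ) : ℂ) := by push_cast; ring
    rw [this]
    exact Complex.zero_le_real.mpr (by positivity)
  have hinv : (0:ℂ) ≤ ((((d : ℂ) + 1) * ((d : ℂ) + 2))⁻¹) := by
    have : (((d : ℂ) + 1) * ((d : ℂ) + 2))⁻¹ = (((((d:ℝ) + 1) * ((d:ℝ) + 2))⁻¹ : ℝ) : ℂ) := by
      push_cast; ring
    rw [this]
    exact Complex.zero_le_real.mpr (by positivity)
  refine aux_psd_smul (aux_psd_smul ?_ hd1') hinv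
  refine Matrix.PosSemidef.add (Matrix.PosSemidef.add (Matrix.PosSemidef.add h1 ?_) ?_) ?_
  · exact aux_psd_smul hG hd1'
  · exact aux_psd_smul .one hcA0
  · exact aux_psd_smul (aux_herm_sq_psd hA) hdn

lemma aux_sum_kron {ι m n p q : Type*} [Fintype m] (s : Finset ι)
    (f : ι → Matrix m n ℂ) (B : Matrix p q ℂ) :
    (∑ i ∈ s, f i) ⊗ₖ B = ∑ i ∈ s, (f i ⊗ₖ B) := by
  ext ⟨i, j⟩ ⟨k, l⟩
  simp [Matrix.sum_apply, Finset.sum_mul]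

lemma aux_kron_sum {ι m n p q : Type*} [Fintype m] (s : Finset ι)
    (A : Matrix m n ℂ) (g : ι → Matrix p q ℂ) :
    A ⊗ₖ (∑ i ∈ s, g i) = ∑ i ∈ s, (A ⊗ₖ g i) := by
  ext ⟨i, j⟩ ⟨k, l⟩
  simp [Matrix.sum_apply, Finset.mul_sum]

lemma aux_sub_kron {m n : Type*} (A A' : Matrix m m ℂ) (B : Matrix n n ℂ) :
    (A - A') ⊗ₖ B = A ⊗ₖ B - A' ⊗ₖ B := by
  ext ⟨i, j⟩ ⟨k, l⟩
  simp [kroneckerMap_apply, sub_mul]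

lemma aux_kron_sub {m n : Type*} (A : Matrix m m ℂ) (B B' : Matrix n n ℂ) :
    A ⊗ₖ (B - B') = A ⊗ₖ B - A ⊗ₖ B' := by
  ext ⟨i, j⟩ ⟨k, l⟩
  simp [kroneckerMap_apply, mul_sub]

lemma aux_trace_kron_expand {d₁ d₂ : ℕ} {K L : Type} [Fintype K] [Fintype L]
    (σ : Matrix (Fin d₁ × Fin d₂) (Fin d₁ × Fin d₂) ℂ)
    (a : K → ℂ) (c : K → Fin d₁ → ℂ) (M : K → Fin d₁ → Matrix (Fin d₁) (Fin d₁) ℂ)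
    (e : L → ℂ) (f : L → Fin d₂ → ℂ) (N : L → Fin d₂ → Matrix (Fin d₂) (Fin d₂) ℂ) :
    Matrix.trace (σ * ((∑ k, a k • ∑ b₁, (c k b₁) • (M k b₁)) ⊗ₖ
        (∑ l, e l • ∑ b₂, (f l b₂) • (N l b₂))))
    = ∑ k, ∑ l, (a k * e l) * ∑ b₁, ∑ b₂,
        Matrix.trace (σ * (M k b₁ ⊗ₖ N l b₂)) * c k b₁ * f l b₂ := by
  simp only [Finset.smul_sum, smul_smul]
  simp only [aux_sum_kron, aux_kron_sum, smul_kronecker, kronecker_smul]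
  simp only [Matrix.mul_sum, Matrix.trace_sum, Matrix.mul_smul, Matrix.trace_smul, smul_eq_mul]
  conv_rhs => rw [Finset.sum_comm]
  refine Finset.sum_congr rfl fun l _ => ?_
  simp only [Finset.mul_sum]
  rw [Finset.sum_comm]
  refine Finset.sum_congr rfl fun k _ => ?_
  rw [Finset.sum_comm]
  refine Finset.sum_congr rfl fun b₁ _ => Finset.sum_congr rfl fun b₂ _ => ?_
  ring

lemma aux_stdBasis_psd {d : ℕ} (b : Fin d) :
    (Matrix.single b b (1:ℂ)).PosSemidef := by
  have hE : (Matrix.single b b (1:ℂ))ᴴ = Matrix.single b b 1 := by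
    ext i j
    by_cases h1 : b = i <;> by_cases h2 : b = j <;>
      simp [Matrix.conjTranspose_apply, Matrix.single, h1, h2]
  have h : Matrix.single b b (1:ℂ)
      = (Matrix.single b b (1:ℂ))ᴴ * Matrix.single b b (1:ℂ) := by
    rw [hE, Matrix.single_mul_single_same]
    norm_num
  rw [h]
  exact Matrix.posSemidef_conjTranspose_mul_self _

lemma aux_ensemble_psd {d : ℕ} {K : Type} [Fintype K]
    (U : K → Matrix (Fin d) (Fin d) ℂ) (p : K → ℝ) (hp : ∀ k, 0 ≤ p k)
    (A' : Matrix (Fin d) (Fin d) ℂ) (hA' : A'.IsHermitian) :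
    (∑ k, (p k : ℂ) • (∑ b : Fin d,
        ((U k * A' * (U k)ᴴ) b b) ^ 2 •
          ((U k)ᴴ * Matrix.single b b 1 * U k))).PosSemidef := by
  refine aux_psd_sum _ _ fun k _ => ?_
  refine aux_psd_smul (aux_psd_sum _ _ fun b _ => ?_) ?_
  · refine aux_psd_smul ((aux_stdBasis_psd b).conjTranspose_mul_mul_same (U k)) ?_
    have hH : (U k * A' * (U k)ᴴ).IsHermitian := by
      have := Matrix.isHermitian_conjTranspose_mul_mul (U k)ᴴ hA'
      simpa using this
    have hstar : star ((U k * A' * (U k)ᴴ) b b) = (U k * A' * (U k)ᴴ) b b := by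
      conv_lhs => rw [← hH.eq]
      simp [Matrix.conjTranspose_apply]
    calc (0:ℂ) ≤ star ((U k * A' * (U k)ᴴ) b b) * ((U k * A' * (U k)ᴴ) b b) :=
          star_mul_self_nonneg _
      _ = ((U k * A' * (U k)ᴴ) b b) ^ 2 := by rw [hstar]; ring
  · exact_mod_cast Complex.zero_le_real.mpr (hp k)

/-- Squared shadow-norm bound for `ρᵀ ⊗ O` in the Clifford–Clifford case:
the design-averaged fourth-moment sum against any normalized positive semidefinite
state `σ` on the bipartite space is at most `4·‖𝒮(A)‖·‖𝒮(B)‖`. -/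
theorem stmt_1 {d₁ d₂ : ℕ} (hd₁ : 1 ≤ d₁) (hd₂ : 1 ≤ d₂)
    {K L : Type} [Fintype K] [Fintype L]
    (U : K → Matrix (Fin d₁) (Fin d₁) ℂ) (p : K → ℝ)
    (V : L → Matrix (Fin d₂) (Fin d₂) ℂ) (q : L → ℝ)
    (hU : ∀ k, U k ∈ Matrix.unitaryGroup (Fin d₁) ℂ)
    (hV : ∀ l, V l ∈ Matrix.unitaryGroup (Fin d₂) ℂ)
    (hp : ∀ k, 0 ≤ p k) (hpsum : ∑ k, p k = 1)
    (hq : ∀ l, 0 ≤ q l) (hqsum : ∑ l, q l = 1)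
    (hmomU : MomentIdentities U p) (hmomV : MomentIdentities V q)
    (A : Matrix (Fin d₁) (Fin d₁) ℂ) (hA : A.IsHermitian)
    (B : Matrix (Fin d₂) (Fin d₂) ℂ) (hB : B.IsHermitian)
    (σ : Matrix (Fin d₁ × Fin d₂) (Fin d₁ × Fin d₂) ℂ)
    (hσ : σ.PosSemidef) (hσtr : σ.trace = 1) :
    ∑ k, ∑ l, ((p k * q l : ℝ) : ℂ) *
      ∑ b₁ : Fin d₁, ∑ b₂ : Fin d₂,
        Matrix.trace (σ *
            (((U k)ᴴ * Matrix.single b₁ b₁ 1 * U k) ⊗ₖ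
              ((V l)ᴴ * Matrix.single b₂ b₂ 1 * V l))) *
          ((U k * (((d₁ : ℂ) + 1) • A - Matrix.trace A • 1) * (U k)ᴴ) b₁ b₁) ^ 2 *
          ((V l * (((d₂ : ℂ) + 1) • B - Matrix.trace B • 1) * (V l)ᴴ) b₂ b₂) ^ 2
      ≤ ((4 * opNorm (Smat A) * opNorm (Smat B) : ℝ) : ℂ) := by
  set A' : Matrix (Fin d₁) (Fin d₁) ℂ := ((d₁ : ℂ) + 1) • A - Matrix.trace A • 1 with hA'def
  set B' : Matrix (Fin d₂) (Fin d₂) ℂ := ((d₂ : ℂ) + 1) • B - Matrix.trace B • 1 with hB'def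
  set X : Matrix (Fin d₁) (Fin d₁) ℂ := ∑ k, (p k : ℂ) • (∑ b : Fin d₁,
      ((U k * A' * (U k)ᴴ) b b) ^ 2 • ((U k)ᴴ * Matrix.single b b 1 * U k)) with hXdef
  set Y : Matrix (Fin d₂) (Fin d₂) ℂ := ∑ l, (q l : ℂ) • (∑ b : Fin d₂,
      ((V l * B' * (V l)ᴴ) b b) ^ 2 • ((V l)ᴴ * Matrix.single b b 1 * V l)) with hYdef
  set cA : ℂ := ((opNorm (Smat A) : ℝ) : ℂ) with hcA
  set cB : ℂ := ((opNorm (Smat B) : ℝ) : ℂ) with hcB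
  have htB : star (Matrix.trace B) = Matrix.trace B := by
    rw [← Matrix.trace_conjTranspose, hB.eq]
  have hB' : B'.IsHermitian := by
    simp [hB'def, Matrix.IsHermitian, conjTranspose_sub, conjTranspose_smul, hB.eq, htB]
  have hYpsd : Y.PosSemidef := aux_ensemble_psd V q hq B' hB'
  have hXc : (cA • 1 - X).PosSemidef := aux_side_psd U p hmomU A hA
  have hYc : (cB • 1 - Y).PosSemidef := aux_side_psd V q hmomV B hB
  have hcA0 : (0:ℂ) ≤ cA := by
    rw [hcA]; exact Complex.zero_le_real.mpr (norm_nonneg _)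
  have hcB0 : (0:ℂ) ≤ cB := by
    rw [hcB]; exact Complex.zero_le_real.mpr (norm_nonneg _)
  -- rewrite the LHS as a trace against X ⊗ₖ Y
  have hLHS : (∑ k, ∑ l, ((p k * q l : ℝ) : ℂ) *
      ∑ b₁ : Fin d₁, ∑ b₂ : Fin d₂,
        Matrix.trace (σ *
            (((U k)ᴴ * Matrix.single b₁ b₁ 1 * U k) ⊗ₖ
              ((V l)ᴴ * Matrix.single b₂ b₂ 1 * V l))) *
          ((U k * A' * (U k)ᴴ) b₁ b₁) ^ 2 *
          ((V l * B' * (V l)ᴴ) b₂ b₂) ^ 2)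
      = Matrix.trace (σ * (X ⊗ₖ Y)) := by
    rw [hXdef, hYdef,
      aux_trace_kron_expand σ (fun k => (p k : ℂ))
        (fun k b₁ => ((U k * A' * (U k)ᴴ) b₁ b₁) ^ 2)
        (fun k b₁ => (U k)ᴴ * Matrix.single b₁ b₁ 1 * U k)
        (fun l => (q l : ℂ))
        (fun l b₂ => ((V l * B' * (V l)ᴴ) b₂ b₂) ^ 2)
        (fun l b₂ => (V l)ᴴ * Matrix.single b₂ b₂ 1 * V l)]
    push_cast
    rfl
  rw [hLHS]
  -- first bound: replace X by cA • 1
  have step1 : Matrix.trace (σ * (X ⊗ₖ Y)) ≤ cA * Matrix.trace (σ * ((1 : Matrix (Fin d₁) (Fin d₁) ℂ) ⊗ₖ Y)) := by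
    have h0 : (0:ℂ) ≤ Matrix.trace (σ * ((cA • 1 - X) ⊗ₖ Y)) :=
      aux_psd_trace_mul_nonneg hσ (aux_psd_kron hXc hYpsd)
    rw [aux_sub_kron, smul_kronecker, Matrix.mul_sub, Matrix.trace_sub, Matrix.mul_smul,
      Matrix.trace_smul, smul_eq_mul] at h0
    exact sub_nonneg.mp h0
  -- second bound: replace Y by cB • 1
  have step2 : Matrix.trace (σ * ((1 : Matrix (Fin d₁) (Fin d₁) ℂ) ⊗ₖ Y)) ≤ cB := by
    have h0 : (0:ℂ) ≤ Matrix.trace (σ * ((1 : Matrix (Fin d₁) (Fin d₁) ℂ) ⊗ₖ (cB • 1 - Y))) :=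
      aux_psd_trace_mul_nonneg hσ (aux_psd_kron .one hYc)
    rw [aux_kron_sub, kronecker_smul, Matrix.one_kronecker_one, Matrix.mul_sub, Matrix.trace_sub,
      Matrix.mul_smul, Matrix.trace_smul, smul_eq_mul, Matrix.mul_one, hσtr, mul_one] at h0
    exact sub_nonneg.mp h0
  have step3 : cA * Matrix.trace (σ * ((1 : Matrix (Fin d₁) (Fin d₁) ℂ) ⊗ₖ Y))
      ≤ cA * cB := mul_le_mul_of_nonneg_left step2 hcA0
  have step4 : cA * cB ≤ ((4 * opNorm (Smat A) * opNorm (Smat B) : ℝ) : ℂ) := by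
    have hcast : ((4 * opNorm (Smat A) * opNorm (Smat B) : ℝ) : ℂ) = 4 * cA * cB := by
      rw [hcA, hcB]; push_cast; ring
    rw [hcast]
    have h3 : (0:ℂ) ≤ 3 * (cA * cB) :=
      mul_nonneg (by norm_num) (mul_nonneg hcA0 hcB0)
    calc cA * cB = cA * cB + 0 := by ring
      _ ≤ cA * cB + 3 * (cA * cB) := by exact add_le_add le_rfl h3
      _ = 4 * cA * cB := by ring
  exact le_trans step1 (le_trans step3 step4)
end

section
/- Let K₁,…,K_r be d×d complex matrices with Σ_{a=1}^{r} K_a† K_a = I_d, and let η := Σ_{i,j=0}^{d-1} E_{ij} ⊗ ( Σ_a K_a E_{ij} K_a† ). If Tr(η²) = d², then the channel is unitary: there exists a d×d unitary U such that Σ_a K_a M K_a† = U M U† for every d×d complex matrix M. -/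
open Matrix Kronecker BigOperators

/-- The (unnormalized) Choi matrix `η = Σ_{i,j} E_{ij} ⊗ (Σ_a K_a E_{ij} K_a†)`. -/
noncomputable def choi {d r : ℕ} (K : Fin r → Matrix (Fin d) (Fin d) ℂ) :
    Matrix (Fin d × Fin d) (Fin d × Fin d) ℂ :=
  ∑ i : Fin d, ∑ j : Fin d,
    (Matrix.single i j 1) ⊗ₖ (∑ a, K a * Matrix.single i j 1 * (K a)ᴴ)

namespace Stmt11Aux

variable {d r : ℕ}

noncomputable def w (K : Fin r → Matrix (Fin d) (Fin d) ℂ) (a : Fin r) :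
    EuclideanSpace ℂ (Fin d × Fin d) := WithLp.toLp 2 (fun p => K a p.2 p.1)

lemma choi_eq (K : Fin r → Matrix (Fin d) (Fin d) ℂ) :
    choi K = ∑ a, vecMulVec (w K a) (star (w K a)) := by
  ext ⟨i, k⟩ ⟨j, l⟩
  simp [choi, w, Matrix.sum_apply, Matrix.mul_apply, Matrix.single, vecMulVec_apply,
    conjTranspose_apply, ite_and, mul_ite, ite_mul, mul_zero, zero_mul,
    Finset.sum_ite_eq, Finset.sum_ite_eq']

lemma vecMulVec_mul_vecMulVec {n : Type*} [Fintype n] (x y z t : n → ℂ) :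
    vecMulVec x y * vecMulVec z t = (∑ q, y q * z q) • vecMulVec x t := by
  ext p s
  simp [vecMulVec_apply, Matrix.mul_apply, Finset.sum_mul, Finset.mul_sum]
  apply Finset.sum_congr rfl
  intro q _
  ring

lemma trace_vecMulVec {n : Type*} [Fintype n] (x y : n → ℂ) :
    Matrix.trace (vecMulVec x y) = ∑ p, x p * y p := by
  simp [Matrix.trace, vecMulVec_apply, Matrix.diag]

lemma inner_w (K : Fin r → Matrix (Fin d) (Fin d) ℂ) (a b : Fin r) :
    (inner ℂ (w K a) (w K b) : ℂ) = ∑ p : Fin d × Fin d, star (w K a p) * w K b p := by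
  simp [PiLp.inner_apply, RCLike.inner_apply, mul_comm]

lemma trace_choi_sq (K : Fin r → Matrix (Fin d) (Fin d) ℂ) :
    Matrix.trace (choi K * choi K)
      = ∑ a, ∑ b, (inner ℂ (w K a) (w K b) : ℂ) * star (inner ℂ (w K a) (w K b) : ℂ) := by
  rw [choi_eq, Finset.sum_mul_sum]
  rw [Matrix.trace_sum]
  refine Finset.sum_congr rfl fun a _ => ?_
  rw [Matrix.trace_sum]
  refine Finset.sum_congr rfl fun b _ => ?_
  rw [vecMulVec_mul_vecMulVec, Matrix.trace_smul, trace_vecMulVec, smul_eq_mul, inner_w]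
  simp only [Pi.star_apply, star_sum, StarMul.star_mul, star_star]
  congr 1
  exact Finset.sum_congr rfl fun p _ => mul_comm _ _

lemma sum_norm_w_sq (K : Fin r → Matrix (Fin d) (Fin d) ℂ)
    (hK : ∑ a, (K a)ᴴ * K a = 1) :
    ∑ a, ‖w K a‖ ^ 2 = (d : ℝ) := by
  have h := congrArg Matrix.trace hK
  rw [Matrix.trace_sum, Matrix.trace_one] at h
  simp only [Fintype.card_fin] at h
  have key : ∀ a : Fin r, ((‖w K a‖ : ℂ)) ^ 2 = Matrix.trace ((K a)ᴴ * K a) := by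
    intro a
    rw [show ((‖w K a‖ : ℂ)) ^ 2 = (inner ℂ (w K a) (w K a) : ℂ) from
      (inner_self_eq_norm_sq_to_K (w K a)).symm, inner_w]
    rw [Matrix.trace, Fintype.sum_prod_type]
    simp [Matrix.mul_apply, Matrix.diag, w, conjTranspose_apply]
  have h2 : ((∑ a, ‖w K a‖ ^ 2 : ℝ) : ℂ) = (d : ℂ) := by
    push_cast
    rw [← h]
    exact Finset.sum_congr rfl fun a _ => key a
  exact_mod_cast h2

end Stmt11Aux

open Stmt11Aux in

/-- If the Choi matrix of a trace-preserving channel satisfies `Tr(η²) = d²`, then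
the channel is unitary: `Σ_a K_a M K_a† = U M U†` for some unitary `U` and all `M`. -/
theorem stmt_11 {d r : ℕ} (K : Fin r → Matrix (Fin d) (Fin d) ℂ)
    (hK : ∑ a, (K a)ᴴ * K a = 1)
    (hpure : Matrix.trace (choi K * choi K) = (d : ℂ) ^ 2) :
    ∃ U : Matrix (Fin d) (Fin d) ℂ, U ∈ Matrix.unitaryGroup (Fin d) ℂ ∧
      ∀ M : Matrix (Fin d) (Fin d) ℂ, ∑ a, K a * M * (K a)ᴴ = U * M * Uᴴ := by
  classical
  rcases Nat.eq_zero_or_pos d with hd | hd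
  · subst hd
    refine ⟨1, one_mem _, fun M => ?_⟩
    ext i j
    exact i.elim0
  · have hw2 := sum_norm_w_sq K hK
    -- real form of the purity hypothesis
    have hsum : ∑ a, ∑ b, ‖(inner ℂ (w K a) (w K b) : ℂ)‖ ^ 2 = (d : ℝ) ^ 2 := by
      have hC : ((∑ a, ∑ b, ‖(inner ℂ (w K a) (w K b) : ℂ)‖ ^ 2 : ℝ) : ℂ) = (d : ℂ) ^ 2 := by
        rw [← hpure, trace_choi_sq]
        push_cast
        refine Finset.sum_congr rfl fun a _ => Finset.sum_congr rfl fun b _ => ?_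
        simp only [Complex.star_def, Complex.mul_conj, Complex.normSq_eq_norm_sq]
        push_cast
        ring
      exact_mod_cast hC
    -- Cauchy-Schwarz equality pairwise
    have pair : ∀ a b : Fin r, ‖(inner ℂ (w K a) (w K b) : ℂ)‖ = ‖w K a‖ * ‖w K b‖ := by
      have hG : ∑ a, ∑ b, (‖w K a‖ * ‖w K b‖) ^ 2 = (d : ℝ) ^ 2 := by
        have : ((d : ℝ)) ^ 2 = (∑ a, ‖w K a‖ ^ 2) * (∑ b, ‖w K b‖ ^ 2) := by rw [hw2]; ring
        rw [this, Finset.sum_mul_sum]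
        exact Finset.sum_congr rfl fun a _ => Finset.sum_congr rfl fun b _ => by ring
      have hle : ∀ p : Fin r × Fin r, p ∈ (Finset.univ : Finset (Fin r × Fin r)) →
          ‖(inner ℂ (w K p.1) (w K p.2) : ℂ)‖ ^ 2 ≤ (‖w K p.1‖ * ‖w K p.2‖) ^ 2 :=
        fun p _ => pow_le_pow_left₀ (norm_nonneg _) (norm_inner_le_norm _ _) 2
      have hEq : ∑ p : Fin r × Fin r, ‖(inner ℂ (w K p.1) (w K p.2) : ℂ)‖ ^ 2
          = ∑ p : Fin r × Fin r, (‖w K p.1‖ * ‖w K p.2‖) ^ 2 := by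
        rw [Fintype.sum_prod_type, Fintype.sum_prod_type, hsum, hG]
      have := (Finset.sum_eq_sum_iff_of_le hle).mp hEq
      intro a b
      have h := this (a, b) (Finset.mem_univ _)
      have h1 : (0:ℝ) ≤ ‖(inner ℂ (w K a) (w K b) : ℂ)‖ := norm_nonneg _
      have h2 : (0:ℝ) ≤ ‖w K a‖ * ‖w K b‖ := by positivity
      nlinarith [h]
    -- some Kraus operator is nonzero
    have hex : ∃ a0, w K a0 ≠ 0 := by
      by_contra h
      push_neg at h
      have : ∑ a, ‖w K a‖ ^ 2 = 0 := by simp [h]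
      rw [hw2] at this
      exact absurd this (by positivity)
    obtain ⟨a0, ha0⟩ := hex
    have hscal : ∀ a, ∃ c : ℂ, w K a = c • w K a0 := by
      intro a
      have h := ((norm_inner_eq_norm_tfae (𝕜 := ℂ) (w K a0) (w K a)).out 0 2).mp (pair a0 a)
      rcases h with h0 | h1
      · exact absurd h0 ha0
      · exact h1
    choose c hc using hscal
    have hKa : ∀ a, K a = c a • K a0 := by
      intro a
      ext k i
      have := congrArg (fun v => v (i, k)) (hc a)
      simpa [Stmt11Aux.w, smul_eq_mul] using this
    set W := K a0 with hW
    set s : ℝ := ∑ a, Complex.normSq (c a) with hsdef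
    have hsnn : 0 ≤ s := Finset.sum_nonneg fun a _ => Complex.normSq_nonneg _
    have hs : ((s : ℂ)) • (Wᴴ * W) = 1 := by
      rw [← hK]
      calc ((s : ℂ)) • (Wᴴ * W) = ∑ a, (starRingEnd ℂ (c a) * c a) • (Wᴴ * W) := by
            rw [← Finset.sum_smul]
            congr 1
            rw [hsdef]
            push_cast
            exact Finset.sum_congr rfl fun a _ => (Complex.normSq_eq_conj_mul_self).symm ▸ rfl
        _ = ∑ a, (K a)ᴴ * K a := by
            refine Finset.sum_congr rfl fun a _ => ?_
            rw [hKa a, conjTranspose_smul, smul_mul_assoc, mul_smul_comm, smul_smul]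
            rfl
    have hs0 : s ≠ 0 := by
      intro h0
      rw [h0] at hs
      simp only [Complex.ofReal_zero, zero_smul] at hs
      have := congrFun (congrFun hs ⟨0, hd⟩) ⟨0, hd⟩
      simp [Matrix.one_apply] at this
    refine ⟨(Real.sqrt s : ℂ) • W, ?_, fun M => ?_⟩
    · rw [Matrix.mem_unitaryGroup_iff']
      rw [Matrix.star_eq_conjTranspose, conjTranspose_smul, smul_mul_assoc, mul_smul_comm,
        smul_smul]
      rw [← hs]
      congr 1
      rw [Complex.star_def, Complex.conj_ofReal, ← Complex.ofReal_mul,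
        Real.mul_self_sqrt hsnn]
    · calc ∑ a, K a * M * (K a)ᴴ = ∑ a, (c a * starRingEnd ℂ (c a)) • (W * M * Wᴴ) := by
            refine Finset.sum_congr rfl fun a _ => ?_
            rw [hKa a, conjTranspose_smul, smul_mul_assoc, smul_mul_assoc, mul_smul_comm,
              smul_smul]
            rfl
        _ = ((s : ℂ)) • (W * M * Wᴴ) := by
            rw [← Finset.sum_smul]
            congr 1
            rw [hsdef]
            push_cast
            exact Finset.sum_congr rfl fun a _ => Complex.mul_conj _
        _ = ((Real.sqrt s : ℂ) • W) * M * ((Real.sqrt s : ℂ) • W)ᴴ := by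
            rw [conjTranspose_smul, smul_mul_assoc, smul_mul_assoc, mul_smul_comm, smul_smul]
            congr 1
            rw [Complex.star_def, Complex.conj_ofReal, ← Complex.ofReal_mul,
              Real.mul_self_sqrt hsnn]
end
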